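/- Let G be a connected non-trivial chordal graph such that for every maximal clique C of G there exist two vertices x_C, y_C ∈ V(C) with the property that every other maximal clique C' of G with V(C') ∩ V(C) ≠ ∅ contains exactly one of x_C and y_C. Then the clique cover number of G equals the number of maximal cliques of G. -/

import Mathlib

/-! Basic definitions for zero forcing and positive (semidefinite) zero forcing. -/

variable {V : Type*}

/-- The standard zero forcing colour change rule: a black vertex `u` (i.e. `u ∈ S`)
forces its unique white neighbour `w`. -/
def ZFForce (G : SimpleGraph V) (S : Set V) (u w : V) : Prop :=
  u ∈ S ∧ w ∉ S ∧ G.Adj u w ∧ ∀ x, G.Adj u x → x ∉ S → x = w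

/-- `x` and `y` are joined by a path of `G` all of whose vertices avoid `S`,
i.e. they lie in the same connected component of `G − S`. -/
def ConnOutside (G : SimpleGraph V) (S : Set V) : V → V → Prop :=
  Relation.ReflTransGen fun x y => x ∉ S ∧ y ∉ S ∧ G.Adj x y

/-- The positive (semidefinite) colour change rule: a black vertex `u` forces a white
neighbour `w` provided `w` is the only white neighbour of `u` lying in the connected
component of `G − S` containing `w`. -/
def PSDForce (G : SimpleGraph V) (S : Set V) (u w : V) : Prop :=
  u ∈ S ∧ w ∉ S ∧ G.Adj u w ∧
    ∀ x, G.Adj u x → x ∉ S → ConnOutside G S x w → x = w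

/-- A list of forces, applied in order starting with black set `S`, is a valid sequence
of applications of the standard colour change rule. -/
def ZFValid (G : SimpleGraph V) : Set V → List (V × V) → Prop
  | _, [] => True
  | S, p :: L => ZFForce G S p.1 p.2 ∧ ZFValid G (insert p.2 S) L

/-- A list of forces, applied in order starting with black set `S`, is a valid sequence
of applications of the positive colour change rule. -/
def PSDValid (G : SimpleGraph V) : Set V → List (V × V) → Prop
  | _, [] => True
  | S, p :: L => PSDForce G S p.1 p.2 ∧ PSDValid G (insert p.2 S) L

/-- The black set resulting from performing the given list of forces. -/
def applyForces (S : Set V) (L : List (V × V)) : Set V :=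
  L.foldl (fun T p => insert p.2 T) S

/-- `B` is a zero forcing set: repeatedly applying the colour change rule starting from
`B` colours every vertex black. -/
def IsZeroForcingSet (G : SimpleGraph V) (B : Set V) : Prop :=
  ∃ L : List (V × V), ZFValid G B L ∧ applyForces B L = Set.univ

/-- `B` is a positive zero forcing set. -/
def IsPSDForcingSet (G : SimpleGraph V) (B : Set V) : Prop :=
  ∃ L : List (V × V), PSDValid G B L ∧ applyForces B L = Set.univ

/-- The zero forcing number `Z(G)`. -/
noncomputable def zfNum (G : SimpleGraph V) : ℕ :=
  sInf {n | ∃ B : Set V, B.ncard = n ∧ IsZeroForcingSet G B}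

/-- The positive (semidefinite) zero forcing number `Z₊(G)`. -/
noncomputable def psdNum (G : SimpleGraph V) : ℕ :=
  sInf {n | ∃ B : Set V, B.ncard = n ∧ IsPSDForcingSet G B}

/-- A clique cover of `G`: a finite family of cliques covering every edge of `G`. -/
def IsCliqueCover (G : SimpleGraph V) (𝒞 : Finset (Set V)) : Prop :=
  (∀ C ∈ 𝒞, G.IsClique C) ∧ ∀ u v, G.Adj u v → ∃ C ∈ 𝒞, u ∈ C ∧ v ∈ C

/-- The clique cover number `cc(G)`. -/
noncomputable def ccNum (G : SimpleGraph V) : ℕ :=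
  sInf {n | ∃ 𝒞 : Finset (Set V), 𝒞.card = n ∧ IsCliqueCover G 𝒞}

/-- A tree cover of `G`: a family of vertex-disjoint induced subtrees whose vertex sets
partition `V(G)`. -/
def IsTreeCover (G : SimpleGraph V) (𝒯 : Finset (Set V)) : Prop :=
  (∀ S ∈ 𝒯, (G.induce S).IsTree) ∧
    (∀ S ∈ 𝒯, ∀ T ∈ 𝒯, S ≠ T → Disjoint S T) ∧
    ∀ v : V, ∃ S ∈ 𝒯, v ∈ S

/-- The tree cover number `T(G)`. -/
noncomputable def tcNum (G : SimpleGraph V) : ℕ :=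
  sInf {n | ∃ 𝒯 : Finset (Set V), 𝒯.card = n ∧ IsTreeCover G 𝒯}

/-- A graph is chordal if it contains no induced cycle on four or more vertices. -/
def IsChordal (G : SimpleGraph V) : Prop :=
  ∀ n, 4 ≤ n → IsEmpty (SimpleGraph.cycleGraph n ↪g G)

/-- `C` is a maximal clique of `G`. -/
def IsMaxClique (G : SimpleGraph V) (C : Set V) : Prop :=
  G.IsClique C ∧ ∀ D : Set V, G.IsClique D → C ⊆ D → C = D

/-- A chordal graph is non-trivial if it has at least two distinct maximal cliques. -/
def NonTrivialChordal (G : SimpleGraph V) : Prop :=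
  IsChordal G ∧ ∃ C₁ C₂ : Set V, IsMaxClique G C₁ ∧ IsMaxClique G C₂ ∧ C₁ ≠ C₂

/-- A vertex is simplicial if its neighbourhood induces a clique. -/
def IsSimplicial (G : SimpleGraph V) (v : V) : Prop :=
  G.IsClique (G.neighborSet v)

lemma exists_maxClique_superset {V : Type*} [Fintype V] (G : SimpleGraph V) {C : Set V}
    (hC : G.IsClique C) : ∃ D, IsMaxClique G D ∧ C ⊆ D := by
  obtain ⟨D, hD, hmax⟩ := Set.Finite.exists_maximalFor id {D : Set V | G.IsClique D ∧ C ⊆ D}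
    (Set.toFinite _) ⟨C, hC, subset_rfl⟩
  exact ⟨D, ⟨hD.1, fun E hE hDE => subset_antisymm hDE (hmax ⟨hE, hD.2.trans hDE⟩ hDE)⟩, hD.2⟩

/-- If `G` is a connected non-trivial chordal graph in which every
maximal clique `C` has two vertices such that every other maximal clique meeting `C`
contains exactly one of them, then `cc(G)` equals the number of maximal cliques. -/
theorem ccNum_eq_card_maxCliques {V : Type*} [Fintype V] (G : SimpleGraph V)
    (hconn : G.Connected) (hG : NonTrivialChordal G)
    (h : ∀ C : Set V, IsMaxClique G C →
      ∃ x ∈ C, ∃ y ∈ C, x ≠ y ∧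
        ∀ C' : Set V, IsMaxClique G C' → C' ≠ C → (C' ∩ C).Nonempty →
          ((x ∈ C' ∧ y ∉ C') ∨ (x ∉ C' ∧ y ∈ C'))) :
    ccNum G = {C : Set V | IsMaxClique G C}.ncard := by
  classical
  set M : Set (Set V) := {C : Set V | IsMaxClique G C} with hM
  have hMfin : M.Finite := Set.toFinite _
  set Mf : Finset (Set V) := hMfin.toFinset with hMf
  have hMcard : M.ncard = Mf.card := by
    rw [hMf]
    exact Set.ncard_eq_toFinset_card _ hMfin
  -- Mf is a clique cover
  have hcover : IsCliqueCover G Mf := by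
    constructor
    · intro C hC
      exact ((hMfin.mem_toFinset).1 hC).1
    · intro u v huv
      have hpair : G.IsClique {u, v} := SimpleGraph.isClique_pair.2 fun _ => huv
      obtain ⟨D, hD, hsub⟩ := exists_maxClique_superset G hpair
      exact ⟨D, (hMfin.mem_toFinset).2 hD, hsub (by simp), hsub (by simp)⟩
  have hub : ccNum G ≤ M.ncard := by
    rw [hMcard]
    exact Nat.sInf_le ⟨Mf, rfl, hcover⟩
  -- lower bound
  have hne : {n | ∃ 𝒞 : Finset (Set V), 𝒞.card = n ∧ IsCliqueCover G 𝒞}.Nonempty :=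
    ⟨Mf.card, Mf, rfl, hcover⟩
  obtain ⟨𝒞, hcard, h𝒞⟩ := Nat.sInf_mem hne
  have key : ∀ C ∈ Mf, ∃ D ∈ 𝒞, ∃ x, ∃ y, x ∈ D ∧ y ∈ D ∧
      (∀ C', IsMaxClique G C' → x ∈ C' → y ∈ C' → C' = C) := by
    intro C hC
    have hCmax : IsMaxClique G C := (hMfin.mem_toFinset).1 hC
    obtain ⟨x, hxC, y, hyC, hxy, huniq⟩ := h C hCmax
    have hadj : G.Adj x y := hCmax.1 hxC hyC hxy
    obtain ⟨D, hD, hxD, hyD⟩ := h𝒞.2 x y hadj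
    refine ⟨D, hD, x, y, hxD, hyD, fun C' hC' hxC' hyC' => ?_⟩
    by_contra hne'
    rcases huniq C' hC' hne' ⟨x, hxC', hxC⟩ with ⟨_, hy⟩ | ⟨hx, _⟩
    · exact hy hyC'
    · exact hx hxC'
  choose g hg using key
  set F : Set V → Set V := fun C => if hc : C ∈ Mf then g C hc else ∅ with hF
  have hFm : ∀ C ∈ Mf, F C ∈ 𝒞 := by
    intro C hC
    simp only [hF, dif_pos hC]
    exact (hg C hC).1
  have hFinj : Set.InjOn F Mf := by
    intro C₁ h₁ C₂ h₂ hEq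
    simp only [Finset.mem_coe] at h₁ h₂
    obtain ⟨x₁, y₁, hx₁, hy₁, hu₁⟩ := (hg C₁ h₁).2
    obtain ⟨x₂, y₂, hx₂, hy₂, hu₂⟩ := (hg C₂ h₂).2
    simp only [hF, dif_pos h₁, dif_pos h₂] at hEq
    rw [hEq] at hx₁ hy₁
    have hclique : G.IsClique (g C₂ h₂) := h𝒞.1 _ (hg C₂ h₂).1
    obtain ⟨E, hE, hsub⟩ := exists_maxClique_superset G hclique
    have e1 : E = C₁ := hu₁ E hE (hsub hx₁) (hsub hy₁)
    have e2 : E = C₂ := hu₂ E hE (hsub hx₂) (hsub hy₂)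
    rw [← e1, ← e2]
  have hlb : M.ncard ≤ ccNum G := by
    rw [hMcard]
    unfold ccNum
    rw [← hcard]
    exact Finset.card_le_card_of_injOn F hFm hFinj
  exact le_antisymm hub hlb
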